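/- Let X : Ω → ℝⁿ and ε : Ω → ℝᵐ be square-integrable random vectors on a probability space, with X and ε independent and E[ε] = 0. Let F ∈ ℝ^{m×n}, set Y = F X + ε, and suppose L_X ∈ ℝ^{n×n} is an invertible matrix with E[X Xᵀ] = L_X L_Xᵀ. Then F is the unique minimizer of the Bayes risk E‖A X − Y‖₂² over all A ∈ ℝ^{m×n}: for every A ∈ ℝ^{m×n}, E‖F X − Y‖₂² ≤ E‖A X − Y‖₂², with equality only if A = F. -/

import Mathlib

open Matrix MeasureTheory

/-- Second (cross-)moment matrix `E[X Yᵀ]` of two random vectors. -/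
noncomputable def secondMoment {Ω : Type} [MeasurableSpace Ω] (μ : Measure Ω)
    {n m : ℕ} (X : Ω → Fin n → ℝ) (Y : Ω → Fin m → ℝ) : Matrix (Fin n) (Fin m) ℝ :=
  Matrix.of fun i j => ∫ ω, X ω i * Y ω j ∂μ

lemma l2mul {Ω : Type} [MeasurableSpace Ω] {μ : Measure Ω} {f g : Ω → ℝ}
    (hf : MemLp f 2 μ) (hg : MemLp g 2 μ) :
    Integrable (fun ω => f ω * g ω) μ := by
  have h := hg.smul hf (r := 1)
  simpa [smul_eq_mul, Pi.mul_def] using memLp_one_iff_integrable.mp h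

/-- If the symmetric factor `L_X` of `Γ_X` is invertible, then `F` is the unique
minimizer of the Bayes risk `E‖A X − Y‖₂²` over all (unconstrained) `A`. -/
theorem forward_full_rank_identity_recovery {Ω : Type} [MeasurableSpace Ω]
    (μ : Measure Ω) [IsProbabilityMeasure μ] {n m : ℕ}
    (X : Ω → Fin n → ℝ) (ε : Ω → Fin m → ℝ)
    (hX : MemLp X 2 μ) (hε : MemLp ε 2 μ)
    (hindep : ProbabilityTheory.IndepFun X ε μ)
    (hmean : (∫ ω, ε ω ∂μ) = 0)
    (F : Matrix (Fin m) (Fin n) ℝ)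
    (LX : Matrix (Fin n) (Fin n) ℝ) (hLXinv : IsUnit LX)
    (hLX : secondMoment μ X X = LX * LXᵀ) :
    ∀ A : Matrix (Fin m) (Fin n) ℝ,
      (∫ ω, ∑ i, (F *ᵥ X ω - (F *ᵥ X ω + ε ω)) i ^ 2 ∂μ
          ≤ ∫ ω, ∑ i, (A *ᵥ X ω - (F *ᵥ X ω + ε ω)) i ^ 2 ∂μ) ∧
      ((∫ ω, ∑ i, (A *ᵥ X ω - (F *ᵥ X ω + ε ω)) i ^ 2 ∂μ)
            = (∫ ω, ∑ i, (F *ᵥ X ω - (F *ᵥ X ω + ε ω)) i ^ 2 ∂μ)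
          → A = F) := by
  intro A
  classical
  set B := A - F with hBdef
  have hXc : ∀ j, MemLp (fun ω => X ω j) 2 μ := fun j =>
    (ContinuousLinearMap.proj (R := ℝ) (φ := fun _ : Fin n => ℝ) j).comp_memLp' hX
  have hεc : ∀ i, MemLp (fun ω => ε ω i) 2 μ := fun i =>
    (ContinuousLinearMap.proj (R := ℝ) (φ := fun _ : Fin m => ℝ) i).comp_memLp' hε
  have hgeq : ∀ i, (fun ω => (B *ᵥ X ω) i) = fun ω => ∑ j, B i j * X ω j := by
    intro i; funext ω; simp [Matrix.mulVec, dotProduct]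
  have hg : ∀ i, MemLp (fun ω => (B *ᵥ X ω) i) 2 μ := by
    intro i; rw [hgeq i]
    exact memLp_finset_sum _ fun j _ => (hXc j).const_mul _
  -- mean of ε components
  have hεint : Integrable ε μ := hε.integrable one_le_two
  have hεm : ∀ i, (∫ ω, ε ω i ∂μ) = 0 := by
    intro i
    have h := (ContinuousLinearMap.proj (R := ℝ) (φ := fun _ : Fin m => ℝ) i).integral_comp_comm hεint
    simp only [ContinuousLinearMap.proj_apply] at h
    rw [show (fun x : Ω => ε x i) = fun x : Ω => ε x i from rfl, h, hmean]
    rfl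
  -- cross terms vanish
  have hXε : ∀ j i, (∫ ω, X ω j * ε ω i ∂μ) = 0 := by
    intro j i
    have hind : ProbabilityTheory.IndepFun (fun ω => X ω j) (fun ω => ε ω i) μ :=
      hindep.comp (measurable_pi_apply j) (measurable_pi_apply i)
    have h := hind.integral_fun_mul_eq_mul_integral (hXc j).aestronglyMeasurable (hεc i).aestronglyMeasurable
    have h2 : (∫ ω, X ω j * ε ω i ∂μ)
        = (∫ ω, X ω j ∂μ) * (∫ ω, ε ω i ∂μ) := h
    rw [h2, hεm i, mul_zero]
  have hcross : ∀ i, (∫ ω, (B *ᵥ X ω) i * ε ω i ∂μ) = 0 := by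
    intro i
    have : (fun ω => (B *ᵥ X ω) i * ε ω i)
        = fun ω => ∑ j, B i j * (X ω j * ε ω i) := by
      funext ω; simp [Matrix.mulVec, dotProduct, Finset.sum_mul, mul_assoc]
    rw [this, integral_finset_sum _ fun j _ =>
      ((l2mul (hXc j) (hεc i)).const_mul _)]
    simp [integral_const_mul, hXε]
  -- integrability of squares and products
  have Ig2 : ∀ i, Integrable (fun ω => (B *ᵥ X ω) i ^ 2) μ := by
    intro i; simpa [pow_two] using l2mul (hg i) (hg i)
  have Iε2 : ∀ i, Integrable (fun ω => ε ω i ^ 2) μ := by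
    intro i; simpa [pow_two] using l2mul (hεc i) (hεc i)
  have Igε : ∀ i, Integrable (fun ω => (B *ᵥ X ω) i * ε ω i) μ :=
    fun i => l2mul (hg i) (hεc i)
  -- per-component expansion
  have hcomp : ∀ i, (∫ ω, ((B *ᵥ X ω) i - ε ω i) ^ 2 ∂μ)
      = (∫ ω, (B *ᵥ X ω) i ^ 2 ∂μ) + (∫ ω, ε ω i ^ 2 ∂μ) := by
    intro i
    have hfun : (fun ω => ((B *ᵥ X ω) i - ε ω i) ^ 2)
        = fun ω => ((B *ᵥ X ω) i ^ 2 + ε ω i ^ 2) - 2 * ((B *ᵥ X ω) i * ε ω i) := by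
      funext ω; ring
    have h1 : Integrable (fun ω => (B *ᵥ X ω) i ^ 2 + ε ω i ^ 2) μ := (Ig2 i).add (Iε2 i)
    have h2 : Integrable (fun ω => 2 * ((B *ᵥ X ω) i * ε ω i)) μ := (Igε i).const_mul 2
    rw [hfun, integral_sub h1 h2, integral_add (Ig2 i) (Iε2 i), integral_const_mul, hcross i]
    ring
  -- rewrite both risks
  have hFrisk : (∫ ω, ∑ i, (F *ᵥ X ω - (F *ᵥ X ω + ε ω)) i ^ 2 ∂μ)
      = ∑ i, ∫ ω, ε ω i ^ 2 ∂μ := by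
    rw [show (fun ω => ∑ i, (F *ᵥ X ω - (F *ᵥ X ω + ε ω)) i ^ 2)
        = fun ω => ∑ i, ε ω i ^ 2 by funext ω; congr 1; funext i; simp]
    exact integral_finset_sum _ fun i _ => Iε2 i
  have hArisk : (∫ ω, ∑ i, (A *ᵥ X ω - (F *ᵥ X ω + ε ω)) i ^ 2 ∂μ)
      = ∑ i, ((∫ ω, (B *ᵥ X ω) i ^ 2 ∂μ) + (∫ ω, ε ω i ^ 2 ∂μ)) := by
    have hfun : (fun ω => ∑ i, (A *ᵥ X ω - (F *ᵥ X ω + ε ω)) i ^ 2)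
        = fun ω => ∑ i, ((B *ᵥ X ω) i - ε ω i) ^ 2 := by
      funext ω; congr 1; funext i
      simp [hBdef, Matrix.sub_mulVec]
      ring
    have Isq : ∀ i, Integrable (fun ω => ((B *ᵥ X ω) i - ε ω i) ^ 2) μ := by
      intro i
      have h := l2mul ((hg i).sub (hεc i)) ((hg i).sub (hεc i))
      simpa [pow_two] using h
    rw [hfun, integral_finset_sum _ fun i _ => Isq i]
    exact Finset.sum_congr rfl fun i _ => hcomp i
  have hnonneg : ∀ i, 0 ≤ ∫ ω, (B *ᵥ X ω) i ^ 2 ∂μ :=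
    fun i => integral_nonneg fun ω => sq_nonneg _
  constructor
  · rw [hFrisk, hArisk, Finset.sum_add_distrib]
    have : (0:ℝ) ≤ ∑ i, ∫ ω, (B *ᵥ X ω) i ^ 2 ∂μ :=
      Finset.sum_nonneg fun i _ => hnonneg i
    linarith
  · intro heq
    rw [hFrisk, hArisk, Finset.sum_add_distrib] at heq
    have hsum0 : (∑ i, ∫ ω, (B *ᵥ X ω) i ^ 2 ∂μ) = 0 := by linarith
    have hzero : ∀ i, (∫ ω, (B *ᵥ X ω) i ^ 2 ∂μ) = 0 := by
      intro i
      have := (Finset.sum_eq_zero_iff_of_nonneg (fun i _ => hnonneg i)).mp hsum0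
      exact this i (Finset.mem_univ i)
    have hint : ∀ j k : Fin n, Integrable (fun ω => X ω j * X ω k) μ :=
      fun j k => l2mul (hXc j) (hXc k)
    have key : ∀ i, (∫ ω, (B *ᵥ X ω) i ^ 2 ∂μ) = ∑ l, ((B * LX) i l) ^ 2 := by
      intro i
      have hfun : (fun ω => (B *ᵥ X ω) i ^ 2)
          = fun ω => ∑ j, ∑ k, B i j * B i k * (X ω j * X ω k) := by
        funext ω
        have h1 : (B *ᵥ X ω) i = ∑ j, B i j * X ω j := by
          simp [Matrix.mulVec, dotProduct]
        rw [h1, pow_two, Finset.sum_mul_sum]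
        refine Finset.sum_congr rfl fun j _ => Finset.sum_congr rfl fun k _ => by ring
      have hIk : ∀ j k : Fin n, Integrable (fun ω => B i j * B i k * (X ω j * X ω k)) μ := by
        intro j k
        simpa [mul_assoc] using (hint j k).const_mul (B i j * B i k)
      rw [hfun, integral_finset_sum _ fun j _ => integrable_finset_sum _ fun k _ => hIk j k]
      have step : ∀ j, (∫ ω, ∑ k, B i j * B i k * (X ω j * X ω k) ∂μ)
          = ∑ k, B i j * B i k * (secondMoment μ X X j k) := by
        intro j
        rw [integral_finset_sum _ fun k _ => hIk j k]
        refine Finset.sum_congr rfl fun k _ => ?_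
        rw [mul_assoc, integral_const_mul, ← mul_assoc]
        rfl
      rw [Finset.sum_congr rfl fun j _ => step j, hLX]
      have hΓ : ∀ j k, (LX * LXᵀ) j k = ∑ l, LX j l * LX k l := by
        intro j k; simp [Matrix.mul_apply]
      have hBL : ∀ l, (B * LX) i l = ∑ j, B i j * LX j l := by
        intro l; simp [Matrix.mul_apply]
      simp_rw [hΓ, Finset.mul_sum, hBL, pow_two, Finset.sum_mul_sum]
      rw [show (∑ j, ∑ k, ∑ l, B i j * B i k * (LX j l * LX k l))
          = ∑ j, ∑ l, ∑ k, B i j * B i k * (LX j l * LX k l) from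
        Finset.sum_congr rfl fun j _ => Finset.sum_comm, Finset.sum_comm]
      refine Finset.sum_congr rfl fun l _ => Finset.sum_congr rfl fun j _ =>
        Finset.sum_congr rfl fun k _ => by ring
    have hBLX : B * LX = 0 := by
      ext i l
      have h0 := hzero i
      rw [key i] at h0
      have h1 := (Finset.sum_eq_zero_iff_of_nonneg (fun l _ => sq_nonneg ((B * LX) i l))).mp
        h0 l (Finset.mem_univ l)
      simpa [pow_two, mul_self_eq_zero] using h1
    have hdet : IsUnit LX.det := (Matrix.isUnit_iff_isUnit_det LX).mp hLXinv
    have hB0 : B = 0 := by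
      calc B = B * (LX * LX⁻¹) := by rw [Matrix.mul_nonsing_inv LX hdet, Matrix.mul_one]
        _ = (B * LX) * LX⁻¹ := by rw [Matrix.mul_assoc]
        _ = 0 := by rw [hBLX, Matrix.zero_mul]
    rw [hBdef] at hB0
    exact sub_eq_zero.mp hB0
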